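/- If a polynomial map P ∈ ℂ[X₁,…,Xₙ]ⁿ is injective as a map from ℂⁿ to ℂⁿ, then P is a polynomial automorphism: P is bijective and its inverse map P⁻¹ is also given by a polynomial map. -/

import Mathlib

open MvPolynomial

/-- Injectivity of a polynomial map over ℂ transfers to any field extension of ℂ. -/
theorem inj_transfer {n : ℕ} (P : Fin n → MvPolynomial (Fin n) ℂ)
    (hinj : Function.Injective (fun x : Fin n → ℂ => fun i => MvPolynomial.eval x (P i)))
    {K : Type} [Field K] (f : ℂ →+* K) :
    Function.Injective (fun v : Fin n → K => fun i => MvPolynomial.eval₂ f v (P i)) := by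
  intro u v huv
  by_contra hne
  obtain ⟨i0, hi0⟩ := Function.ne_iff.mp hne
  set V := (Fin n ⊕ Fin n) ⊕ Unit with hV
  set w : V → K := Sum.elim (Sum.elim u v) (fun _ => (u i0 - v i0)⁻¹) with hw
  set Φ : MvPolynomial V ℂ →+* K := eval₂Hom f w with hΦ
  set J : Ideal (MvPolynomial V ℂ) := RingHom.ker Φ with hJ
  -- the zero locus of J is nonempty
  have hne_zl : (MvPolynomial.zeroLocus ℂ J).Nonempty := by
    by_contra h
    rw [Set.not_nonempty_iff_eq_empty] at h
    have h1 : (1 : MvPolynomial V ℂ) ∈ J.radical := by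
      rw [← MvPolynomial.vanishingIdeal_zeroLocus_eq_radical (K := ℂ), h]
      simp [MvPolynomial.vanishingIdeal_empty]
    have h2 : (1 : MvPolynomial V ℂ) ∈ J := by
      obtain ⟨k, hk⟩ := h1
      simpa using hk
    have h3 : Φ 1 = 0 := h2
    simp at h3
  obtain ⟨xs, hxs⟩ := hne_zl
  rw [MvPolynomial.mem_zeroLocus_iff] at hxs
  replace hxs : ∀ p ∈ J, MvPolynomial.eval xs p = 0 := hxs
  set x : Fin n → ℂ := fun i => xs (Sum.inl (Sum.inl i)) with hx
  set y : Fin n → ℂ := fun i => xs (Sum.inl (Sum.inr i)) with hy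
  -- the difference polynomials are in J
  have hGi : ∀ i, MvPolynomial.eval x (P i) = MvPolynomial.eval y (P i) := by
    intro i
    have hmem : (rename (fun j => Sum.inl (Sum.inl j) : Fin n → V) (P i)
        - rename (fun j => Sum.inl (Sum.inr j) : Fin n → V) (P i)) ∈ J := by
      show Φ _ = 0
      rw [map_sub, hΦ, eval₂Hom_rename, eval₂Hom_rename]
      have hcong := congrFun huv i
      simp only [coe_eval₂Hom] at *
      have e1 : (w ∘ fun j => Sum.inl (Sum.inl j)) = u := rfl
      have e2 : (w ∘ fun j => Sum.inl (Sum.inr j)) = v := rfl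
      rw [e1, e2, hcong, sub_self]
    have h4 := hxs _ hmem
    rw [map_sub, sub_eq_zero] at h4
    rw [eval_rename, eval_rename] at h4
    exact h4
  -- the Rabinowitsch polynomial is in J
  have hH : x i0 ≠ y i0 := by
    have hmem : ((rename (fun j => Sum.inl (Sum.inl j) : Fin n → V) (X i0)
        - rename (fun j => Sum.inl (Sum.inr j) : Fin n → V) (X i0))
        * X (Sum.inr () : V) - 1) ∈ J := by
      show Φ _ = 0
      rw [map_sub, map_mul, map_sub, map_one, hΦ, eval₂Hom_rename, eval₂Hom_rename]
      have e1 : eval₂Hom f (w ∘ fun j => Sum.inl (Sum.inl j)) (X i0) = u i0 := by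
        simp [eval₂Hom_X', hw]
      have e2 : eval₂Hom f (w ∘ fun j => Sum.inl (Sum.inr j)) (X i0) = v i0 := by
        simp [eval₂Hom_X', hw]
      have e3 : (eval₂Hom f w) (X (Sum.inr () : V)) = (u i0 - v i0)⁻¹ := by
        simp [eval₂Hom_X', hw]
      rw [e1, e2, e3, mul_inv_cancel₀ (sub_ne_zero.mpr hi0), sub_self]
    have h5 := hxs _ hmem
    rw [map_sub, map_mul, map_sub, map_one, sub_eq_zero, eval_rename, eval_rename] at h5
    simp only [eval_X, Function.comp_apply] at h5
    intro heq
    simp only [hx, hy] at heq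
    rw [heq, sub_self, zero_mul] at h5
    exact zero_ne_one h5
  exact hH (congrFun (hinj (funext hGi)) i0)

set_option maxHeartbeats 1000000 in
set_option synthInstance.maxHeartbeats 200000 in
/-- Key pointwise lemma: where the denominators do not vanish, the rational
functions `a i / b i` give the inverse of the polynomial map. -/
theorem key_pointwise {n : ℕ} (P : Fin n → MvPolynomial (Fin n) ℂ)
    (hinj : Function.Injective (fun x : Fin n → ℂ => fun i => MvPolynomial.eval x (P i)))
    (a b : Fin n → MvPolynomial (Fin n) ℂ)
    (hb0 : ∀ i, b i ≠ 0)
    (hg0 : (∏ j : Fin n, b j) ≠ 0)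
    (hgsplit : ∀ j, (∏ j : Fin n, b j) = b j * ∏ k ∈ Finset.univ.erase j, b k)
    (ηF : Fin n → FractionRing (MvPolynomial (Fin n) ℂ))
    (hfrac : ∀ i, algebraMap (MvPolynomial (Fin n) ℂ)
        (FractionRing (MvPolynomial (Fin n) ℂ)) (b i) * ηF i
      = algebraMap (MvPolynomial (Fin n) ℂ) (FractionRing (MvPolynomial (Fin n) ℂ)) (a i))
    (hFid : ∀ i, eval₂ ((algebraMap (MvPolynomial (Fin n) ℂ)
        (FractionRing (MvPolynomial (Fin n) ℂ))).comp (C : ℂ →+* MvPolynomial (Fin n) ℂ))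
        ηF (P i) = algebraMap (MvPolynomial (Fin n) ℂ)
          (FractionRing (MvPolynomial (Fin n) ℂ)) (X i)) :
    ∀ y : Fin n → ℂ, (∀ j, eval (fun k => eval y (P k)) (b j) ≠ 0) →
      ∀ i, eval (fun k => eval y (P k)) (a i) = y i * eval (fun k => eval y (P k)) (b i) := by
  intro y hby i
  set x : Fin n → ℂ := fun k => eval y (P k) with hxdef
  set g : MvPolynomial (Fin n) ℂ := ∏ j : Fin n, b j with hgdef
  let A := Localization.Away g
  have hgF : IsUnit (algebraMap (MvPolynomial (Fin n) ℂ)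
      (FractionRing (MvPolynomial (Fin n) ℂ)) g) := IsUnit.mk0 _ (by
    intro h
    exact hg0 ((map_eq_zero_iff _
      (IsFractionRing.injective (MvPolynomial (Fin n) ℂ)
        (FractionRing (MvPolynomial (Fin n) ℂ)))).mp h))
  have hgx : IsUnit (MvPolynomial.eval x g) := by
    apply IsUnit.mk0
    rw [hgdef, map_prod]
    exact Finset.prod_ne_zero_iff.mpr (fun j _ => hby j)
  let φ : A →+* FractionRing (MvPolynomial (Fin n) ℂ) :=
    IsLocalization.Away.lift (g := algebraMap (MvPolynomial (Fin n) ℂ)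
      (FractionRing (MvPolynomial (Fin n) ℂ))) g hgF
  let θ : A →+* ℂ :=
    IsLocalization.Away.lift (g := (MvPolynomial.eval x : MvPolynomial (Fin n) ℂ →+* ℂ)) g hgx
  have hφc : ∀ r : MvPolynomial (Fin n) ℂ, φ (algebraMap (MvPolynomial (Fin n) ℂ) A r)
      = algebraMap (MvPolynomial (Fin n) ℂ) (FractionRing (MvPolynomial (Fin n) ℂ)) r :=
    fun r => IsLocalization.Away.lift_eq g hgF r
  have hθc : ∀ r : MvPolynomial (Fin n) ℂ, θ (algebraMap (MvPolynomial (Fin n) ℂ) A r)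
      = MvPolynomial.eval x r :=
    fun r => IsLocalization.Away.lift_eq g hgx r
  set gS : Submonoid.powers g := ⟨g, Submonoid.mem_powers g⟩ with hgS
  set η' : Fin n → A := fun j =>
    IsLocalization.mk' A (a j * ∏ k ∈ Finset.univ.erase j, b k) gS with hη'def
  have hφη : ∀ j, φ (η' j) = ηF j := by
    intro j
    have h1 : φ (η' j) * algebraMap (MvPolynomial (Fin n) ℂ)
        (FractionRing (MvPolynomial (Fin n) ℂ)) g
        = algebraMap (MvPolynomial (Fin n) ℂ) (FractionRing (MvPolynomial (Fin n) ℂ))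
          (a j * ∏ k ∈ Finset.univ.erase j, b k) := by
      rw [← hφc g, ← hφc (a j * _), ← map_mul]
      congr 1
      exact IsLocalization.mk'_spec A _ gS
    have h2 : ηF j * algebraMap (MvPolynomial (Fin n) ℂ)
        (FractionRing (MvPolynomial (Fin n) ℂ)) g
        = algebraMap (MvPolynomial (Fin n) ℂ) (FractionRing (MvPolynomial (Fin n) ℂ))
          (a j * ∏ k ∈ Finset.univ.erase j, b k) := by
      rw [hgsplit j, map_mul, map_mul, ← mul_assoc, mul_comm (ηF j), hfrac j]
    exact mul_right_cancel₀ hgF.ne_zero (h1.trans h2.symm)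
  have hφinj : Function.Injective φ := by
    have hker : ∀ z : A, φ z = 0 → z = 0 := by
      intro z hz
      obtain ⟨⟨r, s⟩, rfl⟩ := IsLocalization.mk'_surjective (Submonoid.powers g) z
      have h3 : φ (IsLocalization.mk' A r s) * φ (algebraMap (MvPolynomial (Fin n) ℂ) A (s : MvPolynomial (Fin n) ℂ))
          = algebraMap (MvPolynomial (Fin n) ℂ) (FractionRing (MvPolynomial (Fin n) ℂ)) r := by
        rw [← map_mul, IsLocalization.mk'_spec A r s, hφc]
      rw [hz, zero_mul] at h3
      have hr : r = 0 := (map_eq_zero_iff _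
        (IsFractionRing.injective (MvPolynomial (Fin n) ℂ)
          (FractionRing (MvPolynomial (Fin n) ℂ)))).mp h3.symm
      rw [hr]
      exact IsLocalization.mk'_zero _
    intro z1 z2 h
    have := hker (z1 - z2) (by rw [map_sub, h, sub_self])
    exact sub_eq_zero.mp this
  have hAid : ∀ i, eval₂ ((algebraMap (MvPolynomial (Fin n) ℂ) A).comp
      (C : ℂ →+* MvPolynomial (Fin n) ℂ)) η' (P i)
      = algebraMap (MvPolynomial (Fin n) ℂ) A (X i) := by
    intro i
    apply hφinj
    rw [eval₂_comp_left φ ((algebraMap (MvPolynomial (Fin n) ℂ) A).comp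
      (C : ℂ →+* MvPolynomial (Fin n) ℂ)) η' (P i)]
    have hcomp : φ.comp ((algebraMap (MvPolynomial (Fin n) ℂ) A).comp
        (C : ℂ →+* MvPolynomial (Fin n) ℂ))
        = (algebraMap (MvPolynomial (Fin n) ℂ)
          (FractionRing (MvPolynomial (Fin n) ℂ))).comp (C : ℂ →+* MvPolynomial (Fin n) ℂ) := by
      ext c
      exact hφc (C c)
    have hfun : (φ ∘ η') = ηF := funext hφη
    rw [hcomp, hfun, hFid i, hφc]
  set y' : Fin n → ℂ := fun j => θ (η' j) with hy'
  have hP' : ∀ i, eval y' (P i) = x i := by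
    intro i
    have h4 := congrArg θ (hAid i)
    rw [eval₂_comp_left θ ((algebraMap (MvPolynomial (Fin n) ℂ) A).comp
      (C : ℂ →+* MvPolynomial (Fin n) ℂ)) η' (P i)] at h4
    have hcomp : θ.comp ((algebraMap (MvPolynomial (Fin n) ℂ) A).comp
        (C : ℂ →+* MvPolynomial (Fin n) ℂ)) = RingHom.id ℂ := by
      ext c
      simpa using hθc (C c)
    rw [hcomp, hθc] at h4
    have h4' : eval (⇑θ ∘ η') (P i) = x i := by simpa using h4
    exact h4'
  have hyy : y' = y := by
    apply hinj
    funext i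
    show eval y' (P i) = eval y (P i)
    rw [hP' i, hxdef]
  have h5 : y' i * MvPolynomial.eval x g
      = MvPolynomial.eval x (a i * ∏ k ∈ Finset.univ.erase i, b k) := by
    rw [← hθc g, ← hθc (a i * _), ← map_mul]
    congr 1
    exact IsLocalization.mk'_spec A _ gS
  have hrest0 : MvPolynomial.eval x (∏ k ∈ Finset.univ.erase i, b k) ≠ 0 := by
    rw [map_prod]
    exact Finset.prod_ne_zero_iff.mpr (fun k _ => hby k)
  rw [hgsplit i, map_mul, map_mul, ← mul_assoc] at h5
  have h6 := mul_right_cancel₀ hrest0 h5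
  rw [hyy] at h6
  exact h6.symm

theorem eval_bind1 {n : ℕ} (y : Fin n → ℂ) (h : Fin n → MvPolynomial (Fin n) ℂ)
    (p : MvPolynomial (Fin n) ℂ) :
    MvPolynomial.eval y (MvPolynomial.bind₁ h p)
      = MvPolynomial.eval (fun i => MvPolynomial.eval y (h i)) p := by
  have : MvPolynomial.eval y (MvPolynomial.bind₁ h p)
      = eval₂Hom (RingHom.id ℂ) y (MvPolynomial.bind₁ h p) := rfl
  rw [this, eval₂Hom_bind₁]
  rfl

theorem injective_polynomial_map_is_automorphism (n : ℕ)
    (P : Fin n → MvPolynomial (Fin n) ℂ)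
    (hinj : Function.Injective (fun x : Fin n → ℂ => fun i => MvPolynomial.eval x (P i))) :
    Function.Bijective (fun x : Fin n → ℂ => fun i => MvPolynomial.eval x (P i)) ∧
    ∃ Q : Fin n → MvPolynomial (Fin n) ℂ,
      (∀ x : Fin n → ℂ,
        (fun i => MvPolynomial.eval (fun j => MvPolynomial.eval x (P j)) (Q i)) = x) ∧
      (∀ x : Fin n → ℂ,
        (fun i => MvPolynomial.eval (fun j => MvPolynomial.eval x (Q j)) (P i)) = x) := by
  classical
  have hsurjC : Function.Surjective (fun x : Fin n → ℂ => fun i => MvPolynomial.eval x (P i)) :=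
    ax_grothendieck_univ P hinj
  let R := MvPolynomial (Fin n) ℂ
  let F := FractionRing R
  let K := AlgebraicClosure F
  let fF : ℂ →+* F := (algebraMap R F).comp (C : ℂ →+* R)
  let fK : ℂ →+* K := (algebraMap F K).comp fF
  have hinjK : Function.Injective (fun v : Fin n → K => fun i => eval₂ fK v (P i)) :=
    inj_transfer P hinj fK
  -- surjectivity over K
  have hsurjK : Function.Surjective (fun v : Fin n → K => fun i => eval₂ fK v (P i)) := by
    have h1 : Function.Injective (fun v : Fin n → K => fun i => eval v (map fK (P i))) := by
      simpa only [eval_map] using hinjK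
    have h2 := ax_grothendieck_univ (fun i => map fK (P i)) h1
    simpa only [eval_map] using h2
  obtain ⟨η, hη⟩ := hsurjK (fun i => algebraMap F K (algebraMap R F (X i)))
  have hη' : ∀ i, eval₂ fK η (P i) = algebraMap F K (algebraMap R F (X i)) :=
    fun i => congrFun hη i
  -- Galois descent: η comes from F
  haveI hCZR : CharZero R := by
    refine ⟨fun p q h => ?_⟩
    have : (C : ℂ →+* R) p = (C : ℂ →+* R) q := by
      simpa [map_natCast] using h
    exact Nat.cast_injective (C_injective _ _ this)
  haveI hCZF : CharZero F := charZero_of_injective_algebraMap (IsFractionRing.injective R F)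
  have hfix : ∀ (ψ : K →ₐ[F] K) (i : Fin n), ψ (η i) = η i := by
    intro ψ
    have hcomp : (ψ : K →+* K).comp fK = fK := by
      ext z
      show ψ (algebraMap F K (fF z)) = algebraMap F K (fF z)
      rw [AlgHom.commutes]
    have key : (fun i => ψ (η i)) = η := by
      apply hinjK
      funext i
      show eval₂ fK (fun j => ψ (η j)) (P i) = eval₂ fK η (P i)
      have e1 : eval₂ fK (fun j => ψ (η j)) (P i)
          = (ψ : K →+* K) (eval₂ fK η (P i)) := by
        rw [eval₂_comp_left (ψ : K →+* K) fK η (P i), hcomp]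
        rfl
      rw [e1, hη' i]
      show ψ (algebraMap F K _) = _
      rw [AlgHom.commutes]
    intro i
    exact congrFun key i
  haveI : NoZeroSMulDivisors F K :=
    inferInstance
  have hdesc : ∀ i, η i ∈ (algebraMap F K).range := by
    intro i
    haveI : Algebra.IsAlgebraic F K := AlgebraicClosure.isAlgebraic F
    have hint : IsIntegral F (η i) := Algebra.IsIntegral.isIntegral (η i)
    have hsep : (minpoly F (η i)).Separable := (minpoly.irreducible hint).separable
    have hsplit : ((minpoly F (η i)).map (algebraMap F K)).Splits := IsAlgClosed.splits _
    have hrange := Algebra.IsAlgebraic.range_eval_eq_rootSet_minpoly_of_splits (F := F)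
      (K := K) K (fun x : K => IsAlgClosed.splits _) (η i)
    have hroots : (minpoly F (η i)).rootSet K = {η i} := by
      rw [← hrange]
      ext z
      constructor
      · rintro ⟨ψ, rfl⟩
        exact hfix ψ i
      · intro hz
        rw [Set.mem_singleton_iff] at hz
        exact ⟨AlgHom.id F K, by simpa using hz.symm⟩
    have hcard : Fintype.card ((minpoly F (η i)).rootSet K) = 1 := by
      apply Fintype.card_eq_one_iff.mpr
      refine ⟨⟨η i, ?_⟩, ?_⟩
      · rw [Polynomial.mem_rootSet]
        exact ⟨minpoly.ne_zero hint, minpoly.aeval F (η i)⟩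
      · rintro ⟨z, hz⟩
        apply Subtype.ext
        have hz2 : z ∈ ({η i} : Set K) := hroots ▸ hz
        simpa using hz2
    have hdeg : (minpoly F (η i)).natDegree = 1 := by
      rw [← Polynomial.card_rootSet_eq_natDegree hsep hsplit, hcard]
    exact minpoly.natDegree_eq_one_iff.mp hdeg
  choose ηF hηF using hdesc
  -- the identity over F
  have hFid : ∀ i, eval₂ fF ηF (P i) = algebraMap R F (X i) := by
    intro i
    apply (algebraMap F K).injective
    rw [eval₂_comp_left (algebraMap F K) fF ηF (P i)]
    have : ((algebraMap F K) ∘ ηF) = η := funext hηF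
    rw [this]
    exact hη' i
  -- numerators and denominators
  let a : Fin n → R := fun i => IsFractionRing.num R (ηF i)
  let b : Fin n → R := fun i => (IsFractionRing.den R (ηF i) : R)
  have hb0 : ∀ i, b i ≠ 0 :=
    fun i => nonZeroDivisors.coe_ne_zero _
  have hred : ∀ i, IsRelPrime (a i) (b i) := fun i => IsFractionRing.num_den_reduced R _
  have hbF0 : ∀ i, algebraMap R F (b i) ≠ 0 := by
    intro i
    simpa using (IsFractionRing.to_map_ne_zero_of_mem_nonZeroDivisors
      (IsFractionRing.den R (ηF i)).2 : algebraMap R F (b i) ≠ 0)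
  have hfrac : ∀ i, algebraMap R F (b i) * ηF i = algebraMap R F (a i) := by
    intro i
    have h := (IsFractionRing.mk'_num_den' R (ηF i)).symm
    rw [h, mul_comm, div_mul_cancel₀ _ (hbF0 i)]
  -- the product of all denominators
  let g : R := ∏ j : Fin n, b j
  have hg0 : g ≠ 0 := Finset.prod_ne_zero_iff.mpr (fun j _ => hb0 j)
  have hgsplit : ∀ j, g = b j * ∏ k ∈ Finset.univ.erase j, b k := fun j =>
    (Finset.mul_prod_erase Finset.univ b (Finset.mem_univ j)).symm
  have hpoint : ∀ y : Fin n → ℂ, (∀ j, eval (fun k => eval y (P k)) (b j) ≠ 0) →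
      ∀ i, eval (fun k => eval y (P k)) (a i) = y i * eval (fun k => eval y (P k)) (b i) :=
    key_pointwise P hinj a b hb0 hg0 hgsplit ηF hfrac hFid
  -- the composed polynomial identities
  have hid : ∀ i, bind₁ P (a i) = X i * bind₁ P (b i) := by
    intro i
    have hGne : bind₁ P g ≠ 0 := by
      obtain ⟨x₁, hx₁⟩ : ∃ x₁, eval x₁ g ≠ 0 := by
        by_contra h
        push_neg at h
        exact hg0 (MvPolynomial.funext (fun x => by rw [h x, map_zero]))
      obtain ⟨y₁, hy₁⟩ := hsurjC x₁
      intro h0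
      apply hx₁
      have h1 : eval y₁ (bind₁ P g) = 0 := by rw [h0, map_zero]
      rw [eval_bind1] at h1
      rw [show (fun i => eval y₁ (P i)) = x₁ from hy₁] at h1
      exact h1
    have hGmul : (bind₁ P (a i) - X i * bind₁ P (b i)) * bind₁ P g = 0 := by
      apply MvPolynomial.funext
      intro y
      rw [map_zero, map_mul]
      by_cases hcase : eval y (bind₁ P g) = 0
      · rw [hcase, mul_zero]
      · have hbne : ∀ j, eval (fun k => eval y (P k)) (b j) ≠ 0 := by
          intro j hj
          apply hcase
          rw [eval_bind1]
          show eval (fun k => eval y (P k)) (∏ j : Fin n, b j) = 0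
          rw [map_prod]
          exact Finset.prod_eq_zero (Finset.mem_univ j) hj
        have h7 := hpoint y hbne i
        rw [map_sub, map_mul, eval_bind1, eval_bind1, eval_X, h7, sub_self, zero_mul]
    rcases mul_eq_zero.mp hGmul with h | h
    · exact sub_eq_zero.mp h
    · exact absurd h hGne
  -- each denominator is a unit
  have hunit : ∀ i, IsUnit (b i) := by
    intro i
    by_contra hnu
    obtain ⟨q, hqirr, hqdvd⟩ := WfDvdMonoid.exists_irreducible_factor hnu (hb0 i)
    have hqprime : Prime q := UniqueFactorizationMonoid.irreducible_iff_prime.mp hqirr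
    have hx₀ : ∃ x₀, eval x₀ q = 0 ∧ eval x₀ (a i) ≠ 0 := by
      by_contra h
      push_neg at h
      have hmem : a i ∈ (Ideal.span {q} : Ideal R).radical := by
        rw [← MvPolynomial.vanishingIdeal_zeroLocus_eq_radical (K := ℂ)]
        intro x hx
        rw [MvPolynomial.mem_zeroLocus_iff] at hx
        exact h x (hx q (Ideal.subset_span rfl))
      obtain ⟨k, hk⟩ := hmem
      rw [Ideal.mem_span_singleton] at hk
      have hdvda : q ∣ a i := hqprime.dvd_of_dvd_pow hk
      exact hqirr.not_isUnit (hred i hdvda hqdvd)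
    obtain ⟨x₀, hq0, ha0⟩ := hx₀
    obtain ⟨y₀, hy₀⟩ := hsurjC x₀
    have hb0x : eval x₀ (b i) = 0 := by
      obtain ⟨c, hc⟩ := hqdvd
      rw [hc, map_mul, hq0, zero_mul]
    have h8 := congrArg (eval y₀) (hid i)
    rw [eval_bind1, map_mul, eval_X, eval_bind1] at h8
    rw [show (fun k => eval y₀ (P k)) = x₀ from hy₀] at h8
    rw [hb0x, mul_zero] at h8
    exact ha0 h8
  -- construct the inverse polynomials
  choose u hu using hunit
  set Q : Fin n → R := fun i => (↑(u i)⁻¹ : R) * a i with hQ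
  have hQP : ∀ i, bind₁ P (Q i) = X i := by
    intro i
    have : bind₁ P (Q i) = bind₁ P ((↑(u i)⁻¹ : R)) * bind₁ P (a i) := by
      rw [hQ, map_mul]
    rw [this, hid i, ← mul_assoc, mul_comm _ (X i), mul_assoc, ← map_mul]
    have : (↑(u i)⁻¹ : R) * b i = 1 := by
      rw [← hu i, Units.inv_mul]
    rw [this, map_one, mul_one]
  have hfirst : ∀ x : Fin n → ℂ,
      (fun i => MvPolynomial.eval (fun j => MvPolynomial.eval x (P j)) (Q i)) = x := by
    intro x
    funext i
    have h9 := congrArg (eval x) (hQP i)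
    rw [eval_bind1, eval_X] at h9
    exact h9
  refine ⟨⟨hinj, hsurjC⟩, Q, hfirst, ?_⟩
  intro x
  obtain ⟨z, hz⟩ := hsurjC x
  funext i
  have h10 : (fun j => MvPolynomial.eval x (Q j)) = z := by
    rw [← hz]
    exact hfirst z
  rw [h10]
  exact congrFun hz i
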